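/- arXiv:2003.01265 — 4 statements merged into one kernel-verified Lean document; each statement's English description precedes it below -/
import Mathlib

section
/- Let Γ : ℝ^{2n} → ℝ^{2n} be a continuously differentiable bijection with continuously differentiable inverse, such that the Jacobian DΓ(z) satisfies (DΓ(z))ᵀ Ω (DΓ(z)) = Ω for every z ∈ ℝ^{2n}. Let φ, Φ : ℝ^{2n} → ℝ be differentiable functions such that the map z ↦ ∇φ(z)ᵀ Ω ∇Φ(z) is Lebesgue integrable on ℝ^{2n}. Then the map z ↦ ∇(φ∘Γ)(z)ᵀ Ω ∇(Φ∘Γ)(z) is also Lebesgue integrable and ∫_{ℝ^{2n}} ∇(φ∘Γ)(z)ᵀ Ω ∇(Φ∘Γ)(z) dz = ∫_{ℝ^{2n}} ∇φ(z)ᵀ Ω ∇Φ(z) dz. -/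
open Matrix MeasureTheory

/-- The standard symplectic matrix `Ω = [[0, I], [-I, 0]]` on `ℝ^{2n}`,
indexed by `Fin n ⊕ Fin n`. -/
noncomputable def Omega (n : ℕ) : Matrix (Fin n ⊕ Fin n) (Fin n ⊕ Fin n) ℝ :=
  Matrix.fromBlocks 0 1 (-1) 0

/-- The gradient of a scalar function on `ℝ^{2n}`. -/
noncomputable def grad {n : ℕ} (h : ((Fin n ⊕ Fin n) → ℝ) → ℝ)
    (z : (Fin n ⊕ Fin n) → ℝ) : (Fin n ⊕ Fin n) → ℝ :=
  fun i => fderiv ℝ h z (Pi.single i 1)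

/-- The Jacobian matrix of a vector field on `ℝ^{2n}`. -/
noncomputable def jac {n : ℕ} (F : ((Fin n ⊕ Fin n) → ℝ) → ((Fin n ⊕ Fin n) → ℝ))
    (z : (Fin n ⊕ Fin n) → ℝ) : Matrix (Fin n ⊕ Fin n) (Fin n ⊕ Fin n) ℝ :=
  Matrix.of fun i j => fderiv ℝ (fun y => F y i) z (Pi.single j 1)

lemma Omega_mul_neg_Omega (n : ℕ) : Omega n * (-(Omega n)) = 1 := by
  have h : Omega n * Omega n = -1 := by
    ext i j
    simp only [Omega, Matrix.fromBlocks_multiply]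
    cases i <;> cases j <;>
      simp [Matrix.fromBlocks, Matrix.one_apply, Matrix.neg_apply]
  rw [Matrix.mul_neg, h, neg_neg]

lemma neg_Omega_mul_Omega (n : ℕ) : (-(Omega n)) * Omega n = 1 := by
  rw [Matrix.neg_mul, ← Matrix.mul_neg, Omega_mul_neg_Omega]

/-- If `Jᵀ Ω J = Ω` then `J Ω Jᵀ = Ω`. -/
lemma symplectic_transpose {n : ℕ} (J : Matrix (Fin n ⊕ Fin n) (Fin n ⊕ Fin n) ℝ)
    (h : Jᵀ * Omega n * J = Omega n) : J * Omega n * Jᵀ = Omega n := by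
  have hL : ((-(Omega n)) * Jᵀ * Omega n) * J = 1 := by
    calc ((-(Omega n)) * Jᵀ * Omega n) * J = (-(Omega n)) * (Jᵀ * Omega n * J) := by
          simp only [Matrix.mul_assoc]
      _ = 1 := by rw [h, neg_Omega_mul_Omega]
  have hR : J * ((-(Omega n)) * Jᵀ * Omega n) = 1 := mul_eq_one_comm.mp hL
  have : J * (-(Omega n)) * Jᵀ = -(Omega n) := by
    have h2 : J * (-(Omega n)) * Jᵀ * (Omega n * (-(Omega n)))
        = (J * ((-(Omega n)) * Jᵀ * Omega n)) * (-(Omega n)) := by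
      simp only [Matrix.mul_assoc]
    rw [Omega_mul_neg_Omega, Matrix.mul_one, hR, Matrix.one_mul] at h2
    exact h2
  have := congrArg Neg.neg this
  simpa [Matrix.mul_neg, Matrix.neg_mul] using this

lemma basis_single {n : ℕ} (j : Fin n ⊕ Fin n) :
    (fun j' => if j' = j then (1:ℝ) else 0) = Pi.single j 1 := by
  funext j'; simp [Pi.single_apply]

lemma jac_apply {n : ℕ} {Γ : ((Fin n ⊕ Fin n) → ℝ) → ((Fin n ⊕ Fin n) → ℝ)}
    (hΓ : Differentiable ℝ Γ) (z : (Fin n ⊕ Fin n) → ℝ) (i j : Fin n ⊕ Fin n) :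
    jac Γ z i j = fderiv ℝ Γ z (Pi.single j 1) i := by
  simp only [jac, Matrix.of_apply]
  have h1 : (fun y => Γ y i)
      = (ContinuousLinearMap.proj (R := ℝ) (φ := fun _ : (Fin n ⊕ Fin n) => ℝ) i) ∘ Γ := rfl
  rw [h1, fderiv_comp z (ContinuousLinearMap.proj i).differentiableAt (hΓ z),
    ContinuousLinearMap.fderiv]
  rfl

lemma jac_eq_toMatrix' {n : ℕ} {Γ : ((Fin n ⊕ Fin n) → ℝ) → ((Fin n ⊕ Fin n) → ℝ)}
    (hΓ : Differentiable ℝ Γ) (z : (Fin n ⊕ Fin n) → ℝ) :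
    jac Γ z = LinearMap.toMatrix' (fderiv ℝ Γ z : ((Fin n ⊕ Fin n) → ℝ) →ₗ[ℝ] _) := by
  ext i j
  rw [jac_apply hΓ, LinearMap.toMatrix'_apply]
  rfl

lemma det_jac {n : ℕ} {Γ : ((Fin n ⊕ Fin n) → ℝ) → ((Fin n ⊕ Fin n) → ℝ)}
    (hΓ : Differentiable ℝ Γ) (z : (Fin n ⊕ Fin n) → ℝ) :
    (jac Γ z).det = (fderiv ℝ Γ z).det := by
  rw [jac_eq_toMatrix' hΓ, LinearMap.det_toMatrix']

lemma fderiv_apply_eq_dot {n : ℕ} {φ : ((Fin n ⊕ Fin n) → ℝ) → ℝ}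
    (w v : (Fin n ⊕ Fin n) → ℝ) :
    fderiv ℝ φ w v = ∑ j, v j * grad φ w j := by
  conv_lhs => rw [pi_eq_sum_univ v]
  rw [map_sum]
  refine Finset.sum_congr rfl fun j _ => ?_
  have : (fun j' => if j = j' then (1:ℝ) else 0) = Pi.single j 1 := by
    funext j'; simp [Pi.single_apply, eq_comm]
  rw [this, (fderiv ℝ φ w).map_smul, smul_eq_mul]
  rfl

lemma grad_comp {n : ℕ} {Γ : ((Fin n ⊕ Fin n) → ℝ) → ((Fin n ⊕ Fin n) → ℝ)}
    {φ : ((Fin n ⊕ Fin n) → ℝ) → ℝ} (hΓ : Differentiable ℝ Γ) (hφ : Differentiable ℝ φ)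
    (z : (Fin n ⊕ Fin n) → ℝ) :
    grad (φ ∘ Γ) z = (jac Γ z)ᵀ.mulVec (grad φ (Γ z)) := by
  funext i
  simp only [grad]
  rw [fderiv_comp z (hφ (Γ z)) (hΓ z), ContinuousLinearMap.comp_apply,
    fderiv_apply_eq_dot]
  simp only [Matrix.mulVec, dotProduct, Matrix.transpose_apply]
  exact Finset.sum_congr rfl fun j _ => by rw [jac_apply hΓ]

/-- if `Γ` is a `C¹` diffeomorphism of `ℝ^{2n}` whose Jacobian is everywhere
symplectic, and `φ, Φ` are differentiable with `z ↦ ∇φ(z)ᵀ Ω ∇Φ(z)` integrable, then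
`z ↦ ∇(φ∘Γ)(z)ᵀ Ω ∇(Φ∘Γ)(z)` is integrable with the same integral
(symplecticity of the Koopman operator). -/
theorem stmt_6 (n : ℕ) (Γ Γinv : ((Fin n ⊕ Fin n) → ℝ) → ((Fin n ⊕ Fin n) → ℝ))
    (hΓ : ContDiff ℝ 1 Γ) (hΓinv : ContDiff ℝ 1 Γinv)
    (hleft : Function.LeftInverse Γinv Γ) (hright : Function.RightInverse Γinv Γ)
    (hsymp : ∀ z, (jac Γ z)ᵀ * Omega n * jac Γ z = Omega n)
    (φ Φ : ((Fin n ⊕ Fin n) → ℝ) → ℝ)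
    (hφ : Differentiable ℝ φ) (hΦ : Differentiable ℝ Φ)
    (hint : Integrable (fun z => grad φ z ⬝ᵥ (Omega n).mulVec (grad Φ z))) :
    Integrable (fun z => grad (φ ∘ Γ) z ⬝ᵥ (Omega n).mulVec (grad (Φ ∘ Γ) z)) ∧
      ∫ z, grad (φ ∘ Γ) z ⬝ᵥ (Omega n).mulVec (grad (Φ ∘ Γ) z)
        = ∫ z, grad φ z ⬝ᵥ (Omega n).mulVec (grad Φ z) := by
  have hGdiff : Differentiable ℝ Γ := hΓ.differentiable one_ne_zero
  set f : ((Fin n ⊕ Fin n) → ℝ) → ℝ :=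
    fun z => grad φ z ⬝ᵥ (Omega n).mulVec (grad Φ z) with hf
  -- pointwise identity
  have key : ∀ z, grad (φ ∘ Γ) z ⬝ᵥ (Omega n).mulVec (grad (Φ ∘ Γ) z) = f (Γ z) := by
    intro z
    rw [grad_comp hGdiff hφ z, grad_comp hGdiff hΦ z]
    set J := jac Γ z with hJ
    set u := grad φ (Γ z)
    set v := grad Φ (Γ z)
    calc (Jᵀ.mulVec u) ⬝ᵥ (Omega n).mulVec (Jᵀ.mulVec v)
        = (u ᵥ* J) ⬝ᵥ (Omega n * Jᵀ).mulVec v := by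
          rw [Matrix.mulVec_mulVec, Matrix.mulVec_transpose]
      _ = (u ᵥ* (J * (Omega n * Jᵀ))) ⬝ᵥ v := by
          rw [Matrix.dotProduct_mulVec, Matrix.vecMul_vecMul]
      _ = (u ᵥ* Omega n) ⬝ᵥ v := by
          rw [← Matrix.mul_assoc, symplectic_transpose J (hsymp z)]
      _ = u ⬝ᵥ (Omega n).mulVec v := (Matrix.dotProduct_mulVec u (Omega n) v).symm
  -- the Jacobian determinant has absolute value 1
  have hJdet : ∀ z, |(fderiv ℝ Γ z).det| = 1 := by
    intro z
    have hΩ : (Omega n).det ≠ 0 := by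
      have h1 := congrArg Matrix.det (Omega_mul_neg_Omega n)
      rw [Matrix.det_mul, Matrix.det_one] at h1
      intro h; rw [h, zero_mul] at h1; exact zero_ne_one h1
    have h2 := congrArg Matrix.det (hsymp z)
    rw [Matrix.det_mul, Matrix.det_mul, Matrix.det_transpose] at h2
    have h3 : ((jac Γ z).det * (jac Γ z).det - 1) * (Omega n).det = 0 := by
      linear_combination h2
    have h4 : (jac Γ z).det * (jac Γ z).det = 1 := by
      rcases mul_eq_zero.mp h3 with h | h
      · linarith
      · exact absurd h hΩ
    have h5 : |(jac Γ z).det| * |(jac Γ z).det| = 1 := by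
      rw [← abs_mul, h4, abs_one]
    have := abs_nonneg (jac Γ z).det
    rw [← det_jac hGdiff z]
    nlinarith
  -- change of variables
  have hf' : ∀ x ∈ Set.univ, HasFDerivWithinAt Γ (fderiv ℝ Γ x) Set.univ x :=
    fun x _ => (hGdiff x).hasFDerivAt.hasFDerivWithinAt
  have hinj : Set.InjOn Γ Set.univ := hleft.injective.injOn
  have himg : Γ '' Set.univ = Set.univ := by
    rw [Set.image_univ]; exact hright.surjective.range_eq
  have heq : (fun x => |(fderiv ℝ Γ x).det| • f (Γ x))
      = fun z => grad (φ ∘ Γ) z ⬝ᵥ (Omega n).mulVec (grad (Φ ∘ Γ) z) := by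
    funext z
    rw [hJdet z, one_smul, key z]
  have hint2 : IntegrableOn f (Γ '' Set.univ) volume := by
    rw [himg]
    exact integrableOn_univ.mpr hint
  rw [integrableOn_image_iff_integrableOn_abs_det_fderiv_smul volume MeasurableSet.univ
    hf' hinj] at hint2
  rw [heq] at hint2
  refine ⟨integrableOn_univ.mp hint2, ?_⟩
  calc ∫ z, grad (φ ∘ Γ) z ⬝ᵥ (Omega n).mulVec (grad (Φ ∘ Γ) z)
      = ∫ z, |(fderiv ℝ Γ z).det| • f (Γ z) := by rw [heq]
    _ = ∫ z in Set.univ, |(fderiv ℝ Γ z).det| • f (Γ z) := setIntegral_univ.symm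
    _ = ∫ x in Γ '' Set.univ, f x :=
        (integral_image_eq_integral_abs_det_fderiv_smul volume MeasurableSet.univ
          hf' hinj f).symm
    _ = ∫ z, f z := by rw [himg, setIntegral_univ]
end

section
/- Let F : ℝ^{2n} → ℝ^{2n} be continuously differentiable such that Ω · DF(z) is a symmetric matrix for every z ∈ ℝ^{2n}, and let φ, Φ : ℝ^{2n} → ℝ be twice continuously differentiable with compact support. Define (L φ)(z) = F(z)ᵀ ∇φ(z) and (L Φ)(z) = F(z)ᵀ ∇Φ(z). Then ∫_{ℝ^{2n}} ∇φ(z)ᵀ Ω ∇(L Φ)(z) dz = − ∫_{ℝ^{2n}} ∇(L φ)(z)ᵀ Ω ∇Φ(z) dz. -/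
open Matrix MeasureTheory

/-! ### Auxiliary material -/

section Aux

/-- Integral of a directional derivative of a `C¹` compactly supported function vanishes. -/
lemma integral_fderiv_zero {ι : Type*} [Fintype ι] {h : (ι → ℝ) → ℝ} (hh : ContDiff ℝ 1 h)
    (hs : HasCompactSupport h) (v : ι → ℝ) :
    ∫ z, fderiv ℝ h z v = 0 := by
  have hc : Continuous fun z => fderiv ℝ h z v :=
    (hh.continuous_fderiv one_ne_zero).clm_apply continuous_const
  have hcs : HasCompactSupport fun z => fderiv ℝ h z v := hs.fderiv_apply ℝ v
  have := integral_mul_fderiv_eq_neg_fderiv_mul_of_integrable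
    (f := fun _ : ι → ℝ => (1:ℝ)) (g := h) (v := v) (μ := volume)
    ?_ ?_ ?_ (fun x _ => differentiableAt_const (1:ℝ)) (fun x _ => hh.differentiable one_ne_zero x)
  · simpa using this
  · simp
  · simpa using hc.integrable_of_hasCompactSupport hcs
  · simpa using (hh.continuous).integrable_of_hasCompactSupport hs

/-- The key linear-algebra identity. -/
lemma key_alg {ι : Type*} [Fintype ι] [DecidableEq ι] (M J P Q : Matrix ι ι ℝ) (a b f : ι → ℝ)
    (hMJ : (M * J).IsSymm) (hM : Mᵀ = -M) (hM2 : M * M = -1)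
    (hP : P.IsSymm) (hQ : Q.IsSymm) :
    a ⬝ᵥ M *ᵥ (Jᵀ *ᵥ b + Q *ᵥ f) + (Jᵀ *ᵥ a + P *ᵥ f) ⬝ᵥ M *ᵥ b
      = f ⬝ᵥ (P *ᵥ (M *ᵥ b) + Q *ᵥ (Mᵀ *ᵥ a)) + (a ⬝ᵥ M *ᵥ b) * J.trace := by
  have hJt : Jᵀ = M * J * M := by
    have h1 : Jᵀ * Mᵀ = M * J := by
      have := hMJ.eq; rw [Matrix.transpose_mul] at this; exact this
    rw [hM] at h1
    have h2 : Jᵀ * M = -(M * J) := by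
      have : -(Jᵀ * -M) = -(M*J) := by rw [h1]
      simpa [Matrix.mul_neg] using this
    calc Jᵀ = Jᵀ * 1 := by rw [Matrix.mul_one]
      _ = Jᵀ * -(M * M) := by rw [hM2]; simp
      _ = -(Jᵀ * M * M) := by rw [Matrix.mul_neg, Matrix.mul_assoc]
      _ = -(-(M * J) * M) := by rw [h2]
      _ = M * J * M := by simp
  have htr : J.trace = 0 := by
    have h1 : J.trace = Jᵀ.trace := (Matrix.trace_transpose J).symm
    rw [hJt, Matrix.trace_mul_cycle, hM2] at h1
    simp [Matrix.neg_mul, Matrix.one_mul, Matrix.trace_neg] at h1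
    linarith
  have hMJt : M * Jᵀ = -(J * M) := by
    rw [hJt, ← Matrix.mul_assoc, ← Matrix.mul_assoc, hM2]
    simp [Matrix.neg_mul, Matrix.one_mul]
  have t1 : a ⬝ᵥ M *ᵥ (Jᵀ *ᵥ b) = a ⬝ᵥ (M * Jᵀ) *ᵥ b := by rw [Matrix.mulVec_mulVec]
  have t3 : (Jᵀ *ᵥ a) ⬝ᵥ M *ᵥ b = a ⬝ᵥ (J * M) *ᵥ b := by
    rw [Matrix.mulVec_transpose, ← Matrix.dotProduct_mulVec, Matrix.mulVec_mulVec]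
  have t2 : a ⬝ᵥ M *ᵥ (Q *ᵥ f) = f ⬝ᵥ Q *ᵥ (Mᵀ *ᵥ a) := by
    rw [Matrix.mulVec_mulVec, Matrix.mulVec_mulVec, dotProduct_comm,
      ← Matrix.vecMul_transpose, Matrix.transpose_mul, hQ.eq, Matrix.dotProduct_mulVec]
  have t4 : (P *ᵥ f) ⬝ᵥ M *ᵥ b = f ⬝ᵥ P *ᵥ (M *ᵥ b) := by
    rw [Matrix.mulVec_mulVec, Matrix.dotProduct_mulVec f, ← Matrix.vecMul_vecMul,
      ← Matrix.dotProduct_mulVec, ← Matrix.mulVec_transpose, hP.eq]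
  rw [Matrix.mulVec_add, dotProduct_add, add_dotProduct, dotProduct_add,
    htr, t1, t2, t3, t4, hMJt]
  simp [Matrix.neg_mulVec, dotProduct_neg]
  ring

/-- The Hessian matrix of a scalar function on `ℝ^{2n}`. -/
noncomputable def hess {n : ℕ} (h : ((Fin n ⊕ Fin n) → ℝ) → ℝ)
    (z : (Fin n ⊕ Fin n) → ℝ) : Matrix (Fin n ⊕ Fin n) (Fin n ⊕ Fin n) ℝ :=
  Matrix.of fun i j => fderiv ℝ (fderiv ℝ h) z (Pi.single i 1) (Pi.single j 1)

lemma Omega_transpose (n : ℕ) : (Omega n)ᵀ = -Omega n := by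
  simp [Omega, Matrix.fromBlocks_transpose, Matrix.fromBlocks_neg]

lemma Omega_mul_Omega (n : ℕ) : Omega n * Omega n = -1 := by
  simp [Omega, Matrix.fromBlocks_multiply, Matrix.fromBlocks_neg, ← Matrix.fromBlocks_one]

variable {n : ℕ} {φ Φ : ((Fin n ⊕ Fin n) → ℝ) → ℝ}
  {F : ((Fin n ⊕ Fin n) → ℝ) → ((Fin n ⊕ Fin n) → ℝ)}

lemma hess_isSymm (hφ : ContDiff ℝ 2 φ) (z : (Fin n ⊕ Fin n) → ℝ) : (hess φ z).IsSymm := by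
  ext i j
  exact (hφ.contDiffAt.isSymmSndFDerivAt (by norm_num)) (Pi.single j 1) (Pi.single i 1)

lemma contDiff_fderiv_apply (hφ : ContDiff ℝ 2 φ) (v : (Fin n ⊕ Fin n) → ℝ) :
    ContDiff ℝ 1 (fun y => fderiv ℝ φ y v) :=
  (hφ.fderiv_right (m := 1) (by norm_num)).clm_apply contDiff_const

lemma fderiv_fderiv_apply (hφ : ContDiff ℝ 2 φ) (z v w : (Fin n ⊕ Fin n) → ℝ) :
    fderiv ℝ (fun y => fderiv ℝ φ y v) z w = fderiv ℝ (fderiv ℝ φ) z w v := by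
  rw [fderiv_clm_apply (((hφ.fderiv_right (m := 1) (by norm_num)).differentiable one_ne_zero) z)
    (differentiableAt_const v)]
  simp

lemma grad_L (hF : ContDiff ℝ 1 F) (hΦ : ContDiff ℝ 2 Φ) (z : (Fin n ⊕ Fin n) → ℝ) :
    grad (fun y => F y ⬝ᵥ grad Φ y) z = (jac F z)ᵀ *ᵥ grad Φ z + hess Φ z *ᵥ F z := by
  have hFk : ∀ k, Differentiable ℝ (fun y => F y k) := fun k =>
    (differentiable_pi.mp (hF.differentiable one_ne_zero)) k
  have hgk : ∀ k, Differentiable ℝ (fun y => fderiv ℝ Φ y (Pi.single k 1)) := fun k =>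
    (contDiff_fderiv_apply hΦ _).differentiable one_ne_zero
  funext j
  show fderiv ℝ (fun y => ∑ k, F y k * fderiv ℝ Φ y (Pi.single k 1)) z (Pi.single j 1) = _
  rw [fderiv_fun_sum (fun k _ => ((hFk k) z).fun_mul ((hgk k) z))]
  rw [ContinuousLinearMap.sum_apply]
  have : ∀ k, fderiv ℝ (fun y => F y k * fderiv ℝ Φ y (Pi.single k 1)) z (Pi.single j 1)
      = fderiv ℝ (fun y => F y k) z (Pi.single j 1) * fderiv ℝ Φ z (Pi.single k 1)
        + F z k * fderiv ℝ (fderiv ℝ Φ) z (Pi.single j 1) (Pi.single k 1) := by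
    intro k
    rw [fderiv_fun_mul ((hFk k) z) ((hgk k) z)]
    simp [fderiv_fderiv_apply hΦ]
    ring
  simp only [this, Finset.sum_add_distrib]
  simp only [Pi.add_apply, Matrix.mulVec, dotProduct, Matrix.transpose_apply, jac, hess,
    Matrix.of_apply, grad]
  congr 1
  · exact Finset.sum_congr rfl fun k _ => mul_comm _ _

lemma contDiff_mulVec_grad (hφ : ContDiff ℝ 2 φ) (M : Matrix (Fin n ⊕ Fin n) (Fin n ⊕ Fin n) ℝ) :
    ContDiff ℝ 1 (fun y => M *ᵥ grad φ y) := by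
  apply contDiff_pi.mpr
  intro i
  show ContDiff ℝ 1 (fun y => ∑ k, M i k * fderiv ℝ φ y (Pi.single k 1))
  exact ContDiff.sum fun k _ => contDiff_const.mul (contDiff_fderiv_apply hφ _)

lemma jac_mulVec_grad (hφ : ContDiff ℝ 2 φ) (M : Matrix (Fin n ⊕ Fin n) (Fin n ⊕ Fin n) ℝ)
    (z : (Fin n ⊕ Fin n) → ℝ) :
    jac (fun y => M *ᵥ grad φ y) z = M * hess φ z := by
  ext i j
  show fderiv ℝ (fun y => ∑ k, M i k * fderiv ℝ φ y (Pi.single k 1)) z (Pi.single j 1)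
    = ∑ k, M i k * hess φ z k j
  rw [fderiv_fun_sum (fun k _ => (((contDiff_fderiv_apply hφ _).differentiable one_ne_zero) z).const_mul _)]
  rw [ContinuousLinearMap.sum_apply]
  refine Finset.sum_congr rfl fun k _ => ?_
  rw [fderiv_const_mul (((contDiff_fderiv_apply hφ _).differentiable one_ne_zero) z)]
  have hsymm := (hφ.contDiffAt.isSymmSndFDerivAt (x := z) (by norm_num))
    (Pi.single j 1) (Pi.single k 1)
  simp only [ContinuousLinearMap.coe_smul', Pi.smul_apply, smul_eq_mul]
  rw [fderiv_fderiv_apply hφ, hsymm]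
  rfl

lemma grad_g (hφ : ContDiff ℝ 2 φ) (hΦ : ContDiff ℝ 2 Φ)
    (M : Matrix (Fin n ⊕ Fin n) (Fin n ⊕ Fin n) ℝ) (z : (Fin n ⊕ Fin n) → ℝ) :
    grad (fun y => grad φ y ⬝ᵥ M *ᵥ grad Φ y) z
      = (hess φ z * M) *ᵥ grad Φ z + hess Φ z *ᵥ (Mᵀ *ᵥ grad φ z) := by
  have h1 : (fun y => grad φ y ⬝ᵥ M *ᵥ grad Φ y) = fun y => (Mᵀ *ᵥ grad φ y) ⬝ᵥ grad Φ y := by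
    funext y
    rw [Matrix.mulVec_transpose, ← Matrix.dotProduct_mulVec]
  rw [h1, grad_L (contDiff_mulVec_grad hφ Mᵀ) hΦ, jac_mulVec_grad hφ Mᵀ z,
    Matrix.transpose_mul, Matrix.transpose_transpose, (hess_isSymm hφ z).eq]

end Aux

/-- for a `C¹` Hamiltonian vector field `F` (i.e. `Ω DF(z)` symmetric) and
`C²` compactly supported observables `φ, Φ`, the operator `L φ = Fᵀ ∇φ` satisfies
`ω(φ, LΦ) = -ω(Lφ, Φ)` for the symplectic form `ω(φ, Φ) = ∫ ∇φᵀ Ω ∇Φ`. -/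
theorem stmt_8 (n : ℕ) (F : ((Fin n ⊕ Fin n) → ℝ) → ((Fin n ⊕ Fin n) → ℝ))
    (hF : ContDiff ℝ 1 F)
    (hHam : ∀ z, (Omega n * jac F z).IsSymm)
    (φ Φ : ((Fin n ⊕ Fin n) → ℝ) → ℝ)
    (hφ : ContDiff ℝ 2 φ) (hΦ : ContDiff ℝ 2 Φ)
    (hφs : HasCompactSupport φ) (hΦs : HasCompactSupport Φ) :
    ∫ z, grad φ z ⬝ᵥ (Omega n).mulVec (grad (fun y => F y ⬝ᵥ grad Φ y) z)
      = - ∫ z, grad (fun y => F y ⬝ᵥ grad φ y) z ⬝ᵥ (Omega n).mulVec (grad Φ z) := by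
  set M := Omega n with hM
  set A := fun z => grad φ z ⬝ᵥ M *ᵥ (grad (fun y => F y ⬝ᵥ grad Φ y) z) with hA
  set B := fun z => grad (fun y => F y ⬝ᵥ grad φ y) z ⬝ᵥ M *ᵥ (grad Φ z) with hB
  set g := fun y => grad φ y ⬝ᵥ M *ᵥ grad Φ y with hg
  have hFk : ∀ k, ContDiff ℝ 1 (fun y => F y k) := fun k => (contDiff_pi.mp hF) k
  -- smoothness of g
  have hgC : ContDiff ℝ 1 g := by
    rw [hg]
    show ContDiff ℝ 1 (fun y => ∑ i, fderiv ℝ φ y (Pi.single i 1)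
      * ∑ k, M i k * fderiv ℝ Φ y (Pi.single k 1))
    exact ContDiff.sum fun i _ => (contDiff_fderiv_apply hφ _).mul
      (ContDiff.sum fun k _ => contDiff_const.mul (contDiff_fderiv_apply hΦ _))
  -- compact support of g
  have hgs : HasCompactSupport g := by
    apply (hφs.fderiv ℝ).mono
    intro z hz
    simp only [Function.mem_support] at hz ⊢
    intro hc
    apply hz
    rw [hg]
    have : grad φ z = 0 := by
      funext i; simp [grad, hc]
    simp [this]
  -- pointwise identity : A + B is a divergence
  have key : ∀ z, A z + B z
      = ∑ i, fderiv ℝ (fun y => g y * F y i) z (Pi.single i 1) := by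
    intro z
    have hdiv : ∀ i, fderiv ℝ (fun y => g y * F y i) z (Pi.single i 1)
        = g z * jac F z i i + F z i * grad g z i := by
      intro i
      rw [fderiv_fun_mul ((hgC.differentiable one_ne_zero) z) (((hFk i).differentiable one_ne_zero) z)]
      simp [jac, grad]
    simp only [hdiv]
    rw [Finset.sum_add_distrib, ← Finset.mul_sum]
    have hsum1 : ∑ i, F z i * grad g z i = F z ⬝ᵥ grad g z := rfl
    have hsum2 : ∑ i, jac F z i i = (jac F z).trace := rfl
    rw [hsum1, hsum2, grad_g hφ hΦ M z]
    show grad φ z ⬝ᵥ M *ᵥ grad (fun y => F y ⬝ᵥ grad Φ y) z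
      + grad (fun y => F y ⬝ᵥ grad φ y) z ⬝ᵥ M *ᵥ grad Φ z = _
    rw [grad_L hF hΦ z, grad_L hF hφ z]
    have hka := key_alg M (jac F z) (hess φ z) (hess Φ z) (grad φ z) (grad Φ z) (F z)
      (hHam z) (Omega_transpose n) (Omega_mul_Omega n) (hess_isSymm hφ z) (hess_isSymm hΦ z)
    rw [hka]
    simp only [hg, Matrix.mulVec_mulVec]
    ring
  -- integrability of A and B
  have hgradcont : ∀ (h : ((Fin n ⊕ Fin n) → ℝ) → ℝ), ContDiff ℝ 1 h →
      Continuous fun z => grad h z := by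
    intro h hh
    exact continuous_pi fun i => (hh.continuous_fderiv one_ne_zero).clm_apply continuous_const
  have hLΦC : ContDiff ℝ 1 (fun y => F y ⬝ᵥ grad Φ y) := by
    show ContDiff ℝ 1 (fun y => ∑ k, F y k * fderiv ℝ Φ y (Pi.single k 1))
    exact ContDiff.sum fun k _ => (hFk k).mul (contDiff_fderiv_apply hΦ _)
  have hLφC : ContDiff ℝ 1 (fun y => F y ⬝ᵥ grad φ y) := by
    show ContDiff ℝ 1 (fun y => ∑ k, F y k * fderiv ℝ φ y (Pi.single k 1))
    exact ContDiff.sum fun k _ => (hFk k).mul (contDiff_fderiv_apply hφ _)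
  have hdotcont : ∀ (u v : ((Fin n ⊕ Fin n) → ℝ) → ((Fin n ⊕ Fin n) → ℝ)),
      Continuous u → Continuous v → Continuous (fun z => u z ⬝ᵥ M *ᵥ v z) := by
    intro u v hu hv
    show Continuous fun z => ∑ i, u z i * ∑ k, M i k * v z k
    exact continuous_finset_sum _ fun i _ => ((continuous_apply i).comp hu).mul
      (continuous_finset_sum _ fun k _ => continuous_const.mul ((continuous_apply k).comp hv))
  have intA : Integrable A := by
    apply Continuous.integrable_of_hasCompactSupport
    · exact hdotcont _ _ (hgradcont φ (hφ.of_le one_le_two)) (hgradcont _ hLΦC)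
    · apply (hφs.fderiv ℝ).mono
      intro z hz
      simp only [Function.mem_support] at hz ⊢
      intro hc
      apply hz
      rw [hA]
      have : grad φ z = 0 := by funext i; simp [grad, hc]
      simp [this]
  have intB : Integrable B := by
    apply Continuous.integrable_of_hasCompactSupport
    · exact hdotcont _ _ (hgradcont _ hLφC) (hgradcont Φ (hΦ.of_le one_le_two))
    · apply (hΦs.fderiv ℝ).mono
      intro z hz
      simp only [Function.mem_support] at hz ⊢
      intro hc
      apply hz
      rw [hB]
      have : grad Φ z = 0 := by funext i; simp [grad, hc]
      simp [this]
  -- the divergence integrates to zero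
  have hzero : ∫ z, (A z + B z) = 0 := by
    rw [integral_congr_ae (Filter.Eventually.of_forall key)]
    rw [integral_finset_sum]
    · refine Finset.sum_eq_zero fun i _ => ?_
      exact integral_fderiv_zero (hgC.mul (hFk i)) (hgs.mul_right) _
    · intro i _
      apply Continuous.integrable_of_hasCompactSupport
      · exact ((hgC.mul (hFk i)).continuous_fderiv one_ne_zero).clm_apply continuous_const
      · exact (hgs.mul_right).fderiv_apply ℝ _
  rw [integral_add intA intB] at hzero
  have : ∫ z, A z = - ∫ z, B z := by linarith
  exact this
end

section
/- Let T > 0 and let y : ℝ → ℝ^m satisfy y(t + T) = y(t) for all t ∈ ℝ. Let Ψ : ℝ^m → ℂ and κ ∈ ℂ with Re(κ) > 0, and suppose Ψ(y(t)) = e^{κ t} Ψ(y(0)) for all t ≥ 0. Then Ψ(y(t)) = 0 for all t ∈ ℝ. -/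
/-- if `y` is `T`-periodic and `Ψ(y(t)) = e^{κ t} Ψ(y(0))` for all `t ≥ 0`
with `Re(κ) > 0`, then `Ψ` vanishes along the whole orbit. -/
theorem stmt_13 (m : ℕ) (T : ℝ) (hT : 0 < T) (y : ℝ → Fin m → ℝ)
    (hper : ∀ t : ℝ, y (t + T) = y t)
    (Ψ : (Fin m → ℝ) → ℂ) (κ : ℂ) (hκ : 0 < κ.re)
    (hprop : ∀ t : ℝ, 0 ≤ t → Ψ (y t) = Complex.exp (κ * t) * Ψ (y 0)) :
    ∀ t : ℝ, Ψ (y t) = 0 := by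
  have hpern : ∀ (n : ℕ) (t : ℝ), y (t + n * T) = y t := by
    intro n
    induction n with
    | zero => intro t; simp
    | succ k ih =>
      intro t
      have : t + (k + 1 : ℕ) * T = (t + k * T) + T := by push_cast; ring
      rw [this, hper, ih]
  -- Ψ (y 0) = 0
  have h0 : Ψ (y 0) = 0 := by
    have h1 : Ψ (y T) = Ψ (y 0) := by
      have := hper 0; rw [zero_add] at this; rw [this]
    have h2 : Ψ (y T) = Complex.exp (κ * T) * Ψ (y 0) := hprop T hT.le
    have h3 : (Complex.exp (κ * T) - 1) * Ψ (y 0) = 0 := by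
      rw [sub_mul, one_mul, ← h2, h1, sub_self]
    rcases mul_eq_zero.1 h3 with h | h
    · exfalso
      have habs : ‖Complex.exp (κ * T)‖ = Real.exp (κ.re * T) := by
        rw [Complex.norm_exp]
        congr 1
        simp [Complex.mul_re]
      have hgt : 1 < ‖Complex.exp (κ * T)‖ := by
        rw [habs]
        exact Real.one_lt_exp_iff.2 (mul_pos hκ hT)
      have : Complex.exp (κ * T) = 1 := by
        have := sub_eq_zero.1 h; exact this
      rw [this] at hgt; simp at hgt
    · exact h
  intro t
  obtain ⟨n, hn⟩ := Archimedean.arch (-t) hT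
  have hnt : 0 ≤ t + n * T := by
    have : (n : ℝ) * T = n • T := by simp
    linarith [hn, this ▸ hn]
  calc Ψ (y t) = Ψ (y (t + n * T)) := by rw [hpern n t]
    _ = Complex.exp (κ * ((t : ℂ) + n * T)) * Ψ (y 0) := by
          have := hprop _ hnt; push_cast at this ⊢; exact this
    _ = 0 := by rw [h0, mul_zero]
end

section
/- Let y : ℝ → ℝ^m be continuous and let y_p : ℝ → ℝ^m be continuous and periodic with period T > 0, such that ‖y(t) − y_p(t)‖ → 0 as t → ∞. Let Ψ : ℝ^m → ℂ be continuous, and let κ ∈ ℂ with Re(κ) > 0 be such that Ψ(y(t)) = e^{κ t} Ψ(y(0)) for all t ≥ 0. Then Ψ(y(0)) = 0. -/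
/-- if a continuous trajectory `y` converges to a continuous `T`-periodic
orbit `y_p`, and a continuous function `Ψ` satisfies `Ψ(y(t)) = e^{κ t} Ψ(y(0))` for all
`t ≥ 0` with `Re(κ) > 0`, then `Ψ(y(0)) = 0`. -/
theorem stmt_14 (m : ℕ) (y yp : ℝ → Fin m → ℝ)
    (hy : Continuous y) (hyp : Continuous yp)
    (T : ℝ) (hT : 0 < T) (hper : ∀ t : ℝ, yp (t + T) = yp t)
    (hconv : Filter.Tendsto (fun t => ‖y t - yp t‖) Filter.atTop (nhds 0))
    (Ψ : (Fin m → ℝ) → ℂ) (hΨ : Continuous Ψ) (κ : ℂ) (hκ : 0 < κ.re)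
    (hprop : ∀ t : ℝ, 0 ≤ t → Ψ (y t) = Complex.exp (κ * t) * Ψ (y 0)) :
    Ψ (y 0) = 0 := by
  by_contra h
  have hc : 0 < ‖Ψ (y 0)‖ := norm_pos_iff.mpr h
  -- the periodic orbit is contained in a compact set
  have hperiodic : Function.Periodic yp T := hper
  set C : Set (Fin m → ℝ) := yp '' Set.Icc 0 T with hC
  have hCcomp : IsCompact C := (isCompact_Icc).image hyp
  have hmemC : ∀ t : ℝ, yp t ∈ C := by
    intro t
    obtain ⟨s, hs, hfs⟩ := hperiodic.exists_mem_Ico₀ hT t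
    exact ⟨s, ⟨hs.1, hs.2.le⟩, hfs.symm⟩
  set K : Set (Fin m → ℝ) := Metric.cthickening 1 C with hK
  have hKcomp : IsCompact K := hCcomp.cthickening
  obtain ⟨M, hM⟩ := hKcomp.exists_bound_of_continuousOn hΨ.continuousOn
  -- eventually y t ∈ K
  have hev : ∀ᶠ t : ℝ in Filter.atTop, y t ∈ K := by
    have := hconv.eventually (eventually_le_nhds (show (0:ℝ) < 1 by norm_num))
    filter_upwards [this] with t ht
    have : dist (y t) (yp t) ≤ 1 := by
      rw [dist_eq_norm]; exact ht
    exact Metric.mem_cthickening_of_dist_le (y t) (yp t) 1 C (hmemC t) this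
  -- but ‖Ψ (y t)‖ tends to infinity
  have htend : Filter.Tendsto (fun t : ℝ => Real.exp (κ.re * t) * ‖Ψ (y 0)‖)
      Filter.atTop Filter.atTop := by
    apply Filter.Tendsto.atTop_mul_const hc
    exact Real.tendsto_exp_atTop.comp (Filter.tendsto_id.const_mul_atTop hκ)
  have hbig : ∀ᶠ t : ℝ in Filter.atTop, M < Real.exp (κ.re * t) * ‖Ψ (y 0)‖ :=
    htend.eventually_gt_atTop M
  have := ((hev.and hbig).and (Filter.eventually_ge_atTop (0:ℝ))).exists
  obtain ⟨t, ⟨htK, htbig⟩, ht0⟩ := this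
  have h1 : ‖Ψ (y t)‖ ≤ M := hM _ htK
  have h2 : ‖Ψ (y t)‖ = Real.exp (κ.re * t) * ‖Ψ (y 0)‖ := by
    rw [hprop t ht0, norm_mul, Complex.norm_exp]
    congr 2
    simp [Complex.mul_re]
  linarith [h1, h2 ▸ h1]
end
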